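/- Let R = P/Q be a rational function with P, Q coprime polynomials, Q ≢ 0, and let z₀ be a simple zero of P (so P(z₀) = 0, P'(z₀) ≠ 0, Q(z₀) ≠ 0). Then z₀ is a superattracting fixed point of Stirling's method St_R, i.e., St_R(z₀) = z₀ and St_R'(z₀) = 0. -/

import Mathlib

/-- A simple zero `z₀` of a rational function `R = P/Q` is a superattracting
fixed point of Stirling's method `St_R`. -/
theorem stirling_simple_zero_superattracting (P Q : Polynomial ℂ)
    (hco : IsCoprime P Q) (hQ : Q ≠ 0) (z₀ : ℂ) (hP0 : P.eval z₀ = 0)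
    (hP' : P.derivative.eval z₀ ≠ 0) (hQ0 : Q.eval z₀ ≠ 0) :
    let R : ℂ → ℂ := fun z => P.eval z / Q.eval z
    let St : ℂ → ℂ := fun z => z - R z / deriv R (z - R z)
    St z₀ = z₀ ∧ deriv St z₀ = 0 := by
  intro R St
  have hR0 : R z₀ = 0 := by simp [R, hP0]
  set g : ℂ → ℂ := fun z =>
    (P.derivative.eval z * Q.eval z - P.eval z * Q.derivative.eval z) / (Q.eval z) ^ 2 with hg
  -- deriv R agrees with g wherever Q ≠ 0
  have hderivR : ∀ w : ℂ, Q.eval w ≠ 0 → deriv R w = g w := by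
    intro w hw
    have h := deriv_fun_div (c := fun z => P.eval z) (d := fun z => Q.eval z)
      (P.differentiableAt) (Q.differentiableAt) hw
    simpa [R, g, Polynomial.deriv] using h
  have hg0 : g z₀ ≠ 0 := by
    simp only [g, hP0, zero_mul, sub_zero]
    exact div_ne_zero (mul_ne_zero hP' hQ0) (pow_ne_zero 2 hQ0)
  -- differentiability facts
  have hRdiff : DifferentiableAt ℂ R z₀ :=
    (P.differentiableAt).div (Q.differentiableAt) hQ0
  have hInner : DifferentiableAt ℂ (fun z => z - R z) z₀ :=
    differentiableAt_id.sub hRdiff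
  have hInner0 : z₀ - R z₀ = z₀ := by rw [hR0, sub_zero]
  have hgdiff : DifferentiableAt ℂ g z₀ :=
    ((P.derivative.differentiableAt.mul Q.differentiableAt).sub
      (P.differentiableAt.mul Q.derivative.differentiableAt)).div
      (Q.differentiableAt.pow 2) (pow_ne_zero 2 hQ0)
  have hgdiff' : DifferentiableAt ℂ g (z₀ - R z₀) := by rwa [hInner0]
  have hhdiff : DifferentiableAt ℂ (fun z => g (z - R z)) z₀ := by
    exact hgdiff'.comp z₀ hInner
  have hh0 : g (z₀ - R z₀) ≠ 0 := by rwa [hInner0]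
  -- the modified Stirling map with g in place of deriv R
  set St₂ : ℂ → ℂ := fun z => z - R z / g (z - R z) with hSt₂
  -- St = St₂ near z₀
  have hQcont : ContinuousAt (fun z => Q.eval (z - R z)) z₀ :=
    (Q.continuousAt).comp (continuousAt_id.sub hRdiff.continuousAt)
  have hev : ∀ᶠ z in nhds z₀, Q.eval (z - R z) ≠ 0 := by
    have : Q.eval (z₀ - R z₀) ≠ 0 := by rwa [hInner0]
    exact hQcont.eventually_ne this
  have hSteq : St =ᶠ[nhds z₀] St₂ := by
    filter_upwards [hev] with z hz
    simp only [St, St₂, hderivR _ hz]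
  constructor
  · simp [St, hR0]
  · rw [hSteq.deriv_eq]
    -- F z = R z / g (z - R z)
    have hFdiff : DifferentiableAt ℂ (fun z => R z / g (z - R z)) z₀ :=
      hRdiff.div hhdiff hh0
    have h1 : deriv St₂ z₀ = 1 - deriv (fun z => R z / g (z - R z)) z₀ :=
      ((hasDerivAt_id z₀).sub hFdiff.hasDerivAt).deriv
    have h2 : deriv (fun z => R z / g (z - R z)) z₀ = 1 := by
      rw [deriv_fun_div hRdiff hhdiff hh0, hR0, zero_mul, sub_zero,
        hderivR z₀ hQ0, sub_zero]
      field_simp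
    rw [h1, h2, sub_self]
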